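/- For the BBGS tower recursion (x_i^{q^m} − x_i)/x_i^{q^j} = (x_{i−1}^{q^m} − x_{i−1})/x_{i−1}^{q^m − q^k + 1} with j+k=m, the differential form ω := ((x_i^{q^m} − x_i)^{q^j + q^k − 2} / x_i^{(q^m−1)q^j}) (dx_i)^{⊗(q^m − q^j − q^k + 1)} is invariant: it equals the same expression with x_i replaced by x_{i−1}, given that −x_i^{−q^j} dx_i = x_{i−1}^{q^k − 2} dx_{i−1}. -/
import Mathlib


/-- **Invariance of the BBGS differential.**
Work in a function field of characteristic `p` (with `q` a power of `p`, `m = j + k`)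
containing elements `x_{i−1} = xim` and `x_i = xi` satisfying the BBGS recursion
`(x_i^{q^m} − x_i)/x_i^{q^j} = (x_{i−1}^{q^m} − x_{i−1})/x_{i−1}^{q^m − q^k + 1}`.
Differentials are modelled by a `K`-module `Ω` containing `dx_i` and `dx_{i−1}`;
differentiating the recursion gives `−x_i^{−q^j}·dx_i = x_{i−1}^{q^k − 2}·dx_{i−1}`.
Then the `(q^m − q^j − q^k + 1)`-fold tensor power differential
`ω = ((x_i^{q^m} − x_i)^{q^j + q^k − 2}/x_i^{(q^m − 1)q^j})·(dx_i)^{⊗(q^m − q^j − q^k + 1)}`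
is invariant: it equals the same expression with `x_i` replaced by `x_{i−1}`. -/
theorem bbgs_key {K : Type*} [Field K] (x y X u : K) (hx : x ≠ 0) (hy : y ≠ 0)
    (a b : ℕ) (ha : 2 ≤ a) (hb : 2 ≤ b)
    (hrel : X * y ^ (a*b - b + 1) = u * x ^ a) :
    X ^ (a+b-2) / x ^ ((a*b-1)*a) * (x ^ a * y ^ (b-2)) ^ (a*b - a - b + 1)
      = u ^ (a+b-2) / y ^ ((a*b-1)*a) := by
  have h1 : a + b ≤ a * b := Nat.add_le_mul ha hb
  have h2 : b ≤ a*b - a := Nat.le_sub_of_add_le (by linarith)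
  have h3 : a ≤ a*b := le_trans (by omega) h1
  have h4 : b ≤ a*b := le_trans (by omega) h1
  have hI1 : a*(a+b-2) + a*(a*b - a - b + 1) = (a*b-1)*a := by
    zify [ha, hb, h1, h2, h3, (show 2 ≤ a + b by omega), (show 1 ≤ a*b from by linarith)]
    ring
  have hI2 : (b-2)*(a*b - a - b + 1) + (a*b-1)*a = (a*b - b + 1)*(a+b-2) := by
    zify [ha, hb, h1, h2, h3, h4, (show 2 ≤ a + b by omega), (show 1 ≤ a*b from by linarith)]
    ring
  have hER : X ^ (a+b-2) * y ^ ((a*b - b + 1)*(a+b-2)) = u ^ (a+b-2) * x ^ (a*(a+b-2)) := by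
    have := congrArg (· ^ (a+b-2)) hrel
    simpa [mul_pow, ← pow_mul, mul_comm] using this
  rw [div_mul_eq_mul_div, div_eq_div_iff (pow_ne_zero _ hx) (pow_ne_zero _ hy)]
  calc X ^ (a+b-2) * (x ^ a * y ^ (b-2)) ^ (a*b - a - b + 1) * y ^ ((a*b-1)*a)
      = (X ^ (a+b-2) * y ^ ((a*b-b+1)*(a+b-2))) * x ^ (a*(a*b - a - b + 1)) := by
        rw [mul_pow, ← pow_mul, ← pow_mul, ← hI2, pow_add]
        ring
    _ = u ^ (a+b-2) * x ^ (a*(a+b-2)) * x ^ (a*(a*b - a - b + 1)) := by rw [hER]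
    _ = u ^ (a+b-2) * x ^ ((a*b-1)*a) := by rw [mul_assoc, ← pow_add, hI1]


theorem bbgs_invariant_differential (p s q m j k : ℕ) (hp : p.Prime) (hs : 0 < s)
    (hq : q = p ^ s) (hj : 0 < j) (hk : 0 < k) (hm : m = j + k)
    (K : Type*) [Field K] [CharP K p]
    (Ω : Type*) [AddCommGroup Ω] [Module K Ω]
    (xim xi : K) (hxim : xim ≠ 0) (hxi : xi ≠ 0)
    (dxim dxi : Ω)
    (hrel : (xi ^ q ^ m - xi) / xi ^ q ^ j =
      (xim ^ q ^ m - xim) / xim ^ (q ^ m - q ^ k + 1))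
    (hdiff : -((xi ^ q ^ j)⁻¹) • dxi = xim ^ (q ^ k - 2) • dxim) :
    ((xi ^ q ^ m - xi) ^ (q ^ j + q ^ k - 2) / xi ^ ((q ^ m - 1) * q ^ j)) •
        (PiTensorProduct.tprod K fun _ : Fin (q ^ m - q ^ j - q ^ k + 1) => dxi) =
      ((xim ^ q ^ m - xim) ^ (q ^ j + q ^ k - 2) / xim ^ ((q ^ m - 1) * q ^ j)) •
        (PiTensorProduct.tprod K fun _ : Fin (q ^ m - q ^ j - q ^ k + 1) => dxim) := by
  have hq2 : 2 ≤ q := by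
    rw [hq]; calc 2 ≤ p := hp.two_le
    _ ≤ p ^ s := Nat.le_self_pow hs.ne' p
  have ha : 2 ≤ q ^ j := le_trans hq2 (Nat.le_self_pow hj.ne' q)
  have hb : 2 ≤ q ^ k := le_trans hq2 (Nat.le_self_pow hk.ne' q)
  set a := q ^ j with hadef
  set b := q ^ k with hbdef
  have hab : q ^ m = a * b := by rw [hm, pow_add]
  set N := q ^ m - a - b + 1 with hNdef
  have hN : N = a*b - a - b + 1 := by rw [hNdef, hab]
  -- step 1: dxi in terms of dxim
  have hdxi : dxi = (-(xi ^ a * xim ^ (b - 2))) • dxim := by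
    have h := congrArg (fun v : Ω => (-(xi ^ a)) • v) hdiff
    simp only [smul_smul] at h
    rw [show -xi ^ a * -(xi ^ a)⁻¹ = 1 by
      field_simp] at h
    rw [one_smul] at h
    rw [h]
    rw [show -xi ^ a * xim ^ (b-2) = -(xi ^ a * xim ^ (b-2)) by ring]
  -- step 2: sign
  have hsign : (-1 : K) ^ N = 1 := by
    rcases eq_or_ne p 2 with rfl | hp2
    · rw [show (-1 : K) = 1 from CharTwo.neg_eq 1, one_pow]
    · have hodd : Odd a := by
        rw [hadef, hq]
        exact (hp.odd_of_ne_two hp2).pow.pow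
      have hEven : Even N := by
        have h1 : a + b ≤ a * b := Nat.add_le_mul ha hb
        have hN' : N = (a-1)*(b-1) := by
          rw [hN]
          have h2 : b ≤ a*b - a := Nat.le_sub_of_add_le (by linarith)
          have h3 : a ≤ a*b := le_trans (by omega) h1
          zify [h2, h3, (show 1 ≤ a by omega), (show 1 ≤ b by omega)]
          ring
        rw [hN']
        exact (Nat.Odd.sub_odd hodd odd_one).mul_right _
      exact hEven.neg_one_pow
  -- step 3: combine tprod
  rw [hdxi, show (fun _ : Fin N => (-(xi ^ a * xim ^ (b-2))) • dxim)
      = fun i : Fin N => (fun _ : Fin N => -(xi ^ a * xim ^ (b-2))) i • (fun _ : Fin N => dxim) i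
      from rfl,
    MultilinearMap.map_smul_univ, Finset.prod_const, Finset.card_univ, Fintype.card_fin,
    smul_smul]
  congr 1
  rw [neg_pow, hsign, one_mul]
  -- step 4: apply key lemma
  have hrel' : (xi ^ q ^ m - xi) * xim ^ (a*b - b + 1) = (xim ^ q ^ m - xim) * xi ^ a := by
    rw [div_eq_div_iff (pow_ne_zero _ hxi) (pow_ne_zero _ hxim)] at hrel
    rw [← hab]; exact hrel
  have := bbgs_key xi xim (xi ^ q ^ m - xi) (xim ^ q ^ m - xim) hxi hxim a b ha hb hrel'
  rw [hN, show (q^m - 1)*a = (a*b-1)*a by rw [hab]]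
  exact this
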